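/- Let H : ℂ × ℂ → ℂ be analytic at the point (0,0). If H(u, u⁻¹ · exp(-1/u)) = 0 for all sufficiently small real u > 0, then H vanishes identically on some neighborhood of (0,0) in ℂ × ℂ. -/

import Mathlib

open Complex Metric Filter Set

/-- Directional derivative in the second coordinate. -/
noncomputable def dY (f : ℂ × ℂ → ℂ) : ℂ × ℂ → ℂ := fun p => fderiv ℂ f p (0, 1)

/-- Iterated directional derivative in the second coordinate. -/
noncomputable def FK (H : ℂ × ℂ → ℂ) : ℕ → ℂ × ℂ → ℂ
  | 0 => H
  | k + 1 => dY (FK H k)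

lemma FK_analyticOnNhd {H : ℂ × ℂ → ℂ} {s : Set (ℂ × ℂ)}
    (h : AnalyticOnNhd ℂ H s) (k : ℕ) : AnalyticOnNhd ℂ (FK H k) s := by
  induction k with
  | zero => exact h
  | succ k ih =>
    exact (ContinuousLinearMap.apply ℂ ℂ ((0:ℂ), (1:ℂ))).comp_analyticOnNhd ih.fderiv

lemma deriv_slice {f : ℂ × ℂ → ℂ} {x y : ℂ} (hf : DifferentiableAt ℂ f (x, y)) :
    deriv (fun w => f (x, w)) y = dY f (x, y) := by
  have h1 : HasDerivAt (fun w : ℂ => (x, w)) ((0:ℂ), (1:ℂ)) y :=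
    (hasDerivAt_const y x).prodMk (hasDerivAt_id y)
  have h2 := hf.hasFDerivAt.comp_hasDerivAt y h1
  exact h2.deriv

lemma iteratedDeriv_slice {H : ℂ × ℂ → ℂ} {r : ℝ}
    (h : AnalyticOnNhd ℂ H (ball ((0:ℂ),(0:ℂ)) r)) (k : ℕ) {x y : ℂ}
    (hx : (x, y) ∈ ball ((0:ℂ),(0:ℂ)) r) :
    iteratedDeriv k (fun w => H (x, w)) y = FK H k (x, y) := by
  induction k generalizing y with
  | zero => simp [FK]
  | succ k ih =>
    rw [iteratedDeriv_succ]
    have ho : IsOpen {w : ℂ | (x, w) ∈ ball ((0:ℂ),(0:ℂ)) r} :=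
      isOpen_ball.preimage (continuous_const.prodMk continuous_id)
    have hev : (fun w => iteratedDeriv k (fun w' => H (x, w')) w)
        =ᶠ[nhds y] (fun w => FK H k (x, w)) := by
      filter_upwards [ho.mem_nhds hx] with w hw using ih hw
    rw [hev.deriv_eq]
    exact deriv_slice ((FK_analyticOnNhd h k _ hx).differentiableAt)


lemma norm_v_eq {u : ℝ} (hu : 0 < u) :
    ‖(u:ℂ)⁻¹ * Complex.exp (-1/(u:ℂ))‖ = Real.exp (-1/u) / u := by
  have h1 : (-1/(u:ℂ)) = (((-1/u : ℝ)):ℂ) := by push_cast; ring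
  rw [norm_mul, h1, Complex.norm_exp, Complex.ofReal_re,
    norm_inv, Complex.norm_real, Real.norm_eq_abs, abs_of_pos hu]
  ring

lemma tendsto_flat (C : ℝ) (n : ℕ) :
    Tendsto (fun u : ℝ => C * (Real.exp (-1/u) / u ^ (n+1))) (nhdsWithin 0 (Set.Ioi 0)) (nhds 0) := by
  have h1 : Tendsto (fun t : ℝ => C * (t ^ (n+1) * Real.exp (-t))) atTop (nhds (C * 0)) :=
    tendsto_const_nhds.mul (Real.tendsto_pow_mul_exp_neg_atTop_nhds_zero (n+1))
  rw [mul_zero] at h1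
  have h2 := h1.comp tendsto_inv_nhdsGT_zero
  rw [show nhds (0:ℝ) = nhds 0 from rfl]
  refine h2.congr' ?_
  filter_upwards [self_mem_nhdsWithin] with u (hu : 0 < u)
  simp only [Function.comp_apply]
  have h3 : -u⁻¹ = -1/u := by ring
  rw [h3]
  field_simp
  rw [one_div, inv_pow, mul_assoc, inv_mul_cancel₀ (pow_ne_zero _ hu.ne'), mul_one]

lemma flat_eventually_zero {g : ℂ → ℂ} (hg : AnalyticAt ℂ g 0) {C : ℝ}
    (hb : ∀ᶠ u : ℝ in nhdsWithin 0 (Set.Ioi 0), ‖g u‖ ≤ C * (Real.exp (-1/u) / u)) :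
    ∀ᶠ z in nhds (0:ℂ), g z = 0 := by
  by_contra h
  have hot : analyticOrderAt g 0 ≠ ⊤ := by
    rw [Ne, analyticOrderAt_eq_top]; exact h
  obtain ⟨n, hn⟩ := WithTop.ne_top_iff_exists.mp hot
  obtain ⟨G, hG, hG0, hfac⟩ := (hg.analyticOrderAt_eq_natCast (n := n)).mp hn.symm
  -- continuity lower bound for G
  have hGpos : 0 < ‖G 0‖ := norm_pos_iff.mpr hG0
  have hGev : ∀ᶠ z in nhds (0:ℂ), ‖G 0‖ / 2 < ‖G z‖ :=
    hG.continuousAt.norm.eventually (lt_mem_nhds (half_lt_self hGpos))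
  -- pull back along real inclusion
  have T : Tendsto (fun u : ℝ => (u:ℂ)) (nhdsWithin 0 (Set.Ioi 0)) (nhds (0:ℂ)) := by
    have h1 : Tendsto (fun u : ℝ => (u:ℂ)) (nhds 0) (nhds ((0:ℝ):ℂ)) :=
      Complex.continuous_ofReal.tendsto 0
    rw [Complex.ofReal_zero] at h1
    exact h1.mono_left nhdsWithin_le_nhds
  have hflat : ∀ᶠ u : ℝ in nhdsWithin 0 (Set.Ioi 0),
      C * (Real.exp (-1/u) / u ^ (n+1)) < ‖G 0‖ / 2 := by
    have h1 : Tendsto (fun u : ℝ => C * (Real.exp (-1/u) / u ^ (n+1)))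
        (nhdsWithin 0 (Set.Ioi 0)) (nhds 0) := tendsto_flat C n
    exact h1.eventually (gt_mem_nhds (by positivity))
  have hcontra : ∀ᶠ u : ℝ in nhdsWithin 0 (Set.Ioi 0), False := by
    filter_upwards [hb, T.eventually hfac, T.eventually hGev, hflat, self_mem_nhdsWithin]
      with u hbu hfacu hGu hflatu hu
    replace hu : 0 < u := hu
    have h1 : ‖g u‖ = u ^ n * ‖G u‖ := by
      rw [hfacu]
      simp only [sub_zero, smul_eq_mul, norm_mul, norm_pow, Complex.norm_real,
        Real.norm_eq_abs, abs_of_pos hu]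
    have h2 : u ^ n * (‖G 0‖ / 2) < u ^ n * ‖G u‖ := by
      apply mul_lt_mul_of_pos_left hGu (by positivity)
    have h3 : C * (Real.exp (-1/u) / u) = (C * (Real.exp (-1/u) / u ^ (n+1))) * u ^ n := by
      field_simp
      ring
    have h4 : (C * (Real.exp (-1/u) / u ^ (n+1))) * u ^ n < (‖G 0‖ / 2) * u ^ n :=
      mul_lt_mul_of_pos_right hflatu (by positivity)
    nlinarith [h1, h2, h3, h4, hbu]
  exact (hcontra.exists).elim (fun _ h => h)

lemma cauchy_coeff_bound {f : ℂ → ℂ} {ρ M : ℝ} (hρ : 0 < ρ)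
    (hc : ContinuousOn f (closedBall 0 ρ))
    (hM : ∀ z ∈ closedBall (0:ℂ) ρ, ‖f z‖ ≤ M) (j : ℕ) :
    ‖(cauchyPowerSeries f 0 ρ).coeff j‖ ≤ M / ρ ^ j := by
  have hM0 : 0 ≤ M := le_trans (norm_nonneg _) (hM 0 (mem_closedBall_self hρ.le))
  have hcirc : ∀ θ : ℝ, circleMap 0 ρ θ ∈ closedBall (0:ℂ) ρ := by
    intro θ
    rw [mem_closedBall_zero_iff, norm_circleMap_zero, abs_of_pos hρ]
  have hcont : Continuous fun θ : ℝ => ‖f (circleMap 0 ρ θ)‖ :=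
    (hc.comp_continuous (continuous_circleMap 0 ρ) hcirc).norm
  have hint : (∫ θ : ℝ in (0)..2 * Real.pi, ‖f (circleMap 0 ρ θ)‖) ≤ 2 * Real.pi * M := by
    have := intervalIntegral.integral_mono_on (μ := MeasureTheory.volume)
      (f := fun θ : ℝ => ‖f (circleMap 0 ρ θ)‖) (g := fun _ : ℝ => M)
      Real.two_pi_pos.le (hcont.intervalIntegrable _ _) intervalIntegrable_const
      (fun θ _ => hM _ (hcirc θ))
    simpa [mul_comm] using this
  have h2 : (2 * Real.pi)⁻¹ * (∫ θ : ℝ in (0)..2 * Real.pi, ‖f (circleMap 0 ρ θ)‖) ≤ M := by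
    rw [inv_mul_le_iff₀ Real.two_pi_pos]
    calc (∫ θ : ℝ in (0)..2 * Real.pi, ‖f (circleMap 0 ρ θ)‖) ≤ 2 * Real.pi * M := hint
    _ = 2 * Real.pi * M := rfl
  rw [← (cauchyPowerSeries f 0 ρ).norm_apply_eq_norm_coef (n := j)]
  calc ‖cauchyPowerSeries f 0 ρ j‖
      ≤ ((2 * Real.pi)⁻¹ * ∫ θ : ℝ in (0)..2 * Real.pi, ‖f (circleMap 0 ρ θ)‖) * |ρ|⁻¹ ^ j :=
        norm_cauchyPowerSeries_le f 0 ρ j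
    _ ≤ M * |ρ|⁻¹ ^ j := mul_le_mul_of_nonneg_right h2 (by positivity)
    _ = M / ρ ^ j := by rw [abs_of_pos hρ, inv_pow, div_eq_mul_inv]

/-- If `H : ℂ × ℂ → ℂ` is analytic at `(0,0)` and `H (u, u⁻¹ * exp (-1/u)) = 0` for
all sufficiently small real `u > 0`, then `H` vanishes identically on a neighborhood
of `(0,0)`. -/
theorem analytic_vanishing_on_inv_exp_curve (H : ℂ × ℂ → ℂ)
    (hH : AnalyticAt ℂ H (0, 0))
    (hvan : ∀ᶠ u : ℝ in nhdsWithin 0 (Set.Ioi 0),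
      H ((u : ℂ), (u : ℂ)⁻¹ * Complex.exp (-1 / (u : ℂ))) = 0) :
    ∀ᶠ p : ℂ × ℂ in nhds (0, 0), H p = 0 := by
  -- Step 1: radius of analyticity
  obtain ⟨r, hr0, hball⟩ : ∃ r > 0, AnalyticOnNhd ℂ H (ball ((0:ℂ),(0:ℂ)) r) := by
    have h1 := hH.eventually_analyticAt
    rw [Metric.eventually_nhds_iff_ball] at h1
    obtain ⟨ε, hε, h2⟩ := h1
    exact ⟨ε, hε, fun p hp => h2 p hp⟩
  set R : NNReal := ⟨r/2, by positivity⟩ with hRdef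
  set ρ : ℝ := (R : ℝ) with hρdef
  have hρr2 : ρ = r / 2 := rfl
  have hρ0 : 0 < ρ := by rw [hρr2]; positivity
  have hρr : ρ < r := by rw [hρr2]; linarith
  have hR0 : 0 < R := by exact_mod_cast hρ0
  -- Step 2: bound M on the closed bidisc
  obtain ⟨M, hM⟩ : ∃ M, ∀ p ∈ closedBall ((0:ℂ),(0:ℂ)) ρ, ‖H p‖ ≤ M :=
    (isCompact_closedBall _ _).exists_bound_of_continuousOn
      (hball.mono (closedBall_subset_ball hρr)).continuousOn
  have hM0 : 0 ≤ M := le_trans (norm_nonneg _) (hM (0,0) (mem_closedBall_self hρ0.le))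
  -- membership helper
  have hmem2 : ∀ x y : ℂ, ‖x‖ < ρ → ‖y‖ < r → (x, y) ∈ ball ((0:ℂ),(0:ℂ)) r := by
    intro x y hx hy
    rw [mem_ball, Prod.dist_eq, dist_zero_right, dist_zero_right]
    exact max_lt (lt_trans hx hρr) hy
  -- slices are differentiable
  have hdiff : ∀ x : ℂ, ‖x‖ < ρ →
      DifferentiableOn ℂ (fun w => H (x, w)) (closedBall 0 ρ) := by
    intro x hx y hy
    have hmem : (x, y) ∈ ball ((0:ℂ),(0:ℂ)) r :=
      hmem2 x y hx (lt_of_le_of_lt (mem_closedBall_zero_iff.mp hy) hρr)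
    exact (((hball _ hmem).differentiableAt).comp y
      ((differentiableAt_const x).prodMk differentiableAt_id)).differentiableWithinAt
  have hslice : ∀ x : ℂ, ‖x‖ < ρ →
      HasFPowerSeriesOnBall (fun w => H (x, w))
        (cauchyPowerSeries (fun w => H (x, w)) 0 ρ) 0 R := by
    intro x hx
    exact (hdiff x hx).hasFPowerSeriesOnBall hR0
  set c : ℕ → ℂ → ℂ := fun j x => (cauchyPowerSeries (fun w => H (x, w)) 0 ρ).coeff j
    with hcdef
  -- uniform coefficient bounds
  have hcb : ∀ x : ℂ, ‖x‖ < ρ → ∀ j, ‖c j x‖ ≤ M / ρ ^ j := by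
    intro x hx j
    refine cauchy_coeff_bound hρ0 (hdiff x hx).continuousOn ?_ j
    intro z hz
    apply hM
    rw [mem_closedBall, Prod.dist_eq, dist_zero_right, dist_zero_right]
    exact max_le hx.le (mem_closedBall_zero_iff.mp hz)
  -- the power series representation of slices
  have hsum : ∀ x : ℂ, ‖x‖ < ρ → ∀ y : ℂ, ‖y‖ < ρ →
      HasSum (fun j => c j x * y ^ j) (H (x, y)) := by
    intro x hx y hy
    have hy' : y ∈ Metric.eball (0:ℂ) R := by
      rw [Metric.emetric_ball_nnreal]
      exact mem_ball_zero_iff.mpr hy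
    have h1 := (hslice x hx).hasSum hy'
    simp only [zero_add] at h1
    have h2 : (fun n => (cauchyPowerSeries (fun w => H (x, w)) 0 ρ) n fun _ => y)
        = fun j => c j x * y ^ j := by
      funext j
      rw [FormalMultilinearSeries.apply_eq_pow_smul_coeff, smul_eq_mul, hcdef]
      ring
    rwa [h2] at h1
  -- coefficients in terms of iterated derivatives
  have hceq : ∀ (j : ℕ) (x : ℂ), ‖x‖ < ρ → c j x = ((Nat.factorial j) : ℂ)⁻¹ * FK H j (x, 0) := by
    intro j x hx
    have h1 := (hslice x hx).factorial_smul (1:ℂ) j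
    rw [FormalMultilinearSeries.apply_eq_pow_smul_coeff, one_pow, one_smul] at h1
    have h2 : iteratedFDeriv ℂ j (fun w => H (x, w)) 0 (fun _ => (1:ℂ))
        = FK H j (x, 0) := by
      rw [← iteratedDeriv_eq_iteratedFDeriv]
      exact iteratedDeriv_slice hball j (hmem2 x 0 hx (by simpa using hr0))
    rw [h2, nsmul_eq_mul] at h1
    have hj : ((Nat.factorial j) : ℂ) ≠ 0 := Nat.cast_ne_zero.mpr (Nat.factorial_ne_zero j)
    field_simp [hcdef]
    linear_combination h1
  -- analyticity of the coefficient functions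
  have hFKanal : ∀ j : ℕ, AnalyticOnNhd ℂ
      (fun x : ℂ => ((Nat.factorial j) : ℂ)⁻¹ * FK H j (x, 0)) (ball (0:ℂ) ρ) := by
    intro j x hx
    have h1 : AnalyticAt ℂ (FK H j) ((fun z : ℂ => (z, (0:ℂ))) x) :=
      FK_analyticOnNhd hball j _ (hmem2 x 0 (mem_ball_zero_iff.mp hx) (by simpa using hr0))
    have hinner : AnalyticAt ℂ (fun z : ℂ => (z, (0:ℂ))) x :=
      analyticAt_id.prod analyticAt_const
    have h2 : AnalyticAt ℂ (fun z : ℂ => FK H j (z, 0)) x := by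
      exact AnalyticAt.comp (g := FK H j) (f := fun z : ℂ => (z, (0:ℂ))) h1 hinner
    exact analyticAt_const.mul h2
  -- main induction: all coefficients vanish on the disc
  have claim : ∀ k : ℕ, ∀ x ∈ ball (0:ℂ) ρ, c k x = 0 := by
    intro k
    induction k using Nat.strong_induction_on with
    | _ k IH =>
    have hbound : ∀ᶠ u : ℝ in nhdsWithin 0 (Set.Ioi 0),
        ‖(fun x : ℂ => ((Nat.factorial k) : ℂ)⁻¹ * FK H k (x, 0)) u‖
          ≤ (2 * M / ρ ^ (k+1)) * (Real.exp (-1/u) / u) := by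
      have hwt : Tendsto (fun u : ℝ => Real.exp (-1/u) / u)
          (nhdsWithin 0 (Set.Ioi 0)) (nhds 0) := by
        have := tendsto_flat 1 0
        simpa using this
      have hsm : ∀ᶠ u : ℝ in nhdsWithin 0 (Set.Ioi 0),
          Real.exp (-1/u) / u < ρ / 2 := hwt.eventually (eventually_lt_nhds (by positivity))
      have hsmall : ∀ᶠ u : ℝ in nhdsWithin 0 (Set.Ioi 0), u < ρ :=
        ((eventually_lt_nhds hρ0).filter_mono nhdsWithin_le_nhds)
      filter_upwards [hvan, hsm, hsmall, self_mem_nhdsWithin]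
        with u hvanu hsmu hult hu0
      replace hu0 : 0 < u := hu0
      set v : ℂ := (u:ℂ)⁻¹ * Complex.exp (-1/(u:ℂ)) with hvdef
      set w : ℝ := Real.exp (-1/u) / u with hwdef
      have hv : ‖v‖ = w := norm_v_eq hu0
      have hwpos : 0 < w := by rw [hwdef]; positivity
      have hx : ‖(u:ℂ)‖ < ρ := by
        rw [Complex.norm_real, Real.norm_eq_abs, abs_of_pos hu0]; exact hult
      have hvρ : ‖v‖ < ρ := by rw [hv]; linarith
      have hs : HasSum (fun j => c j (u:ℂ) * v ^ j) 0 := by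
        have := hsum (u:ℂ) hx v hvρ
        rwa [hvanu] at this
      have hsummable := hs.summable
      have htsum : ∑' j, c j (u:ℂ) * v ^ j = 0 := hs.tsum_eq
      have hsplit := Summable.sum_add_tsum_nat_add (f := fun j => c j (u:ℂ) * v ^ j) (k+1) hsummable
      have hfin : ∑ i ∈ Finset.range (k+1), c i (u:ℂ) * v ^ i = c k (u:ℂ) * v ^ k := by
        refine Finset.sum_eq_single k ?_ ?_
        · intro b hb hbk
          rw [IH b (lt_of_le_of_ne (Nat.lt_succ_iff.mp (Finset.mem_range.mp hb)) hbk)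
            (u:ℂ) (mem_ball_zero_iff.mpr hx), zero_mul]
        · intro hk
          exact absurd (Finset.self_mem_range_succ k) hk
      have hw2 : w / ρ ≤ 1/2 := by
        rw [div_le_div_iff₀ hρ0 (by norm_num : (0:ℝ) < 2)]; linarith
      have hwρ0 : 0 ≤ w / ρ := by positivity
      have hterm : ∀ i : ℕ, ‖c (i+(k+1)) (u:ℂ) * v ^ (i+(k+1))‖
          ≤ (M * (w/ρ)^(k+1)) * (1/2 : ℝ)^i := by
        intro i
        rw [norm_mul, norm_pow, hv]
        calc ‖c (i+(k+1)) (u:ℂ)‖ * w ^ (i+(k+1))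
            ≤ (M / ρ ^ (i+(k+1))) * w ^ (i+(k+1)) :=
              mul_le_mul_of_nonneg_right (hcb (u:ℂ) hx _) (by positivity)
          _ = M * (w/ρ)^(i+(k+1)) := by rw [div_pow]; ring
          _ = (M * (w/ρ)^(k+1)) * (w/ρ)^i := by rw [pow_add]; ring
          _ ≤ (M * (w/ρ)^(k+1)) * (1/2 : ℝ)^i := by
              refine mul_le_mul_of_nonneg_left (pow_le_pow_left₀ hwρ0 hw2 i) (by positivity)
      have hgeo : Summable (fun i : ℕ => (M * (w/ρ)^(k+1)) * (1/2 : ℝ)^i) :=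
        summable_geometric_two.mul_left _
      have hsumnorm : Summable (fun i : ℕ => ‖c (i+(k+1)) (u:ℂ) * v ^ (i+(k+1))‖) :=
        Summable.of_nonneg_of_le (fun _ => norm_nonneg _) hterm hgeo
      have htail : ‖∑' i : ℕ, c (i+(k+1)) (u:ℂ) * v ^ (i+(k+1))‖
          ≤ (M * (w/ρ)^(k+1)) * 2 := by
        calc ‖∑' i : ℕ, c (i+(k+1)) (u:ℂ) * v ^ (i+(k+1))‖
            ≤ ∑' i : ℕ, ‖c (i+(k+1)) (u:ℂ) * v ^ (i+(k+1))‖ := norm_tsum_le_tsum_norm hsumnorm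
          _ ≤ ∑' i : ℕ, (M * (w/ρ)^(k+1)) * (1/2 : ℝ)^i := Summable.tsum_le_tsum hterm hsumnorm hgeo
          _ = (M * (w/ρ)^(k+1)) * ∑' i : ℕ, (1/2 : ℝ)^i := tsum_mul_left
          _ = (M * (w/ρ)^(k+1)) * 2 := by rw [tsum_geometric_two]
      have hkey : ‖c k (u:ℂ)‖ * w ^ k ≤ (M * (w/ρ)^(k+1)) * 2 := by
        have h5 : c k (u:ℂ) * v ^ k = -∑' i : ℕ, c (i+(k+1)) (u:ℂ) * v ^ (i+(k+1)) := by
          rw [hfin] at hsplit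
          rw [htsum] at hsplit
          linear_combination hsplit
        calc ‖c k (u:ℂ)‖ * w ^ k = ‖c k (u:ℂ) * v ^ k‖ := by rw [norm_mul, norm_pow, hv]
          _ = ‖∑' i : ℕ, c (i+(k+1)) (u:ℂ) * v ^ (i+(k+1))‖ := by rw [h5, norm_neg]
          _ ≤ (M * (w/ρ)^(k+1)) * 2 := htail
      have hrhs : (M * (w/ρ)^(k+1)) * 2 = ((2 * M / ρ ^ (k+1)) * w) * w ^ k := by
        rw [div_pow, pow_succ]
        ring
      have hfinal : ‖c k (u:ℂ)‖ ≤ (2 * M / ρ ^ (k+1)) * w := by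
        refine le_of_mul_le_mul_right ?_ (pow_pos hwpos k)
        rw [← hrhs]; exact hkey
      have : ‖(fun x : ℂ => ((Nat.factorial k) : ℂ)⁻¹ * FK H k (x, 0)) (u:ℂ)‖ = ‖c k (u:ℂ)‖ := by
        simp only
        rw [← hceq k (u:ℂ) hx]
      rw [this]
      exact hfinal
    -- apply flatness and the identity theorem
    have hganal := hFKanal k
    have hev0 : ∀ᶠ z in nhds (0:ℂ), (fun x : ℂ => ((Nat.factorial k) : ℂ)⁻¹ * FK H k (x, 0)) z = 0 :=
      flat_eventually_zero (hganal 0 (mem_ball_self hρ0)) hbound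
    have heqz : EqOn (fun x : ℂ => ((Nat.factorial k) : ℂ)⁻¹ * FK H k (x, 0)) 0 (ball (0:ℂ) ρ) := by
      refine hganal.eqOn_zero_of_preconnected_of_eventuallyEq_zero
        (convex_ball (0:ℂ) ρ).isPreconnected (mem_ball_self hρ0) ?_
      exact hev0.mono fun z hz => by simpa using hz
    intro x hx
    rw [hceq k x (mem_ball_zero_iff.mp hx)]
    simpa using heqz hx
  -- conclusion
  filter_upwards [ball_mem_nhds ((0:ℂ),(0:ℂ)) hρ0] with p hp
  obtain ⟨x, y⟩ := p
  rw [mem_ball, Prod.dist_eq, dist_zero_right, dist_zero_right] at hp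
  obtain ⟨hx, hy⟩ := max_lt_iff.mp hp
  have hs := hsum x hx y hy
  have h0 : HasSum (fun j => c j x * y ^ j) 0 := by
    have hz : (fun j => c j x * y ^ j) = fun _ => (0:ℂ) := by
      funext j
      rw [claim j x (mem_ball_zero_iff.mpr hx), zero_mul]
    rw [hz]
    exact hasSum_zero
  exact hs.unique h0
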